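/- The probabilities of the Ewens sampling formula sum to one: for θ > 0 and n ≥ 1, ∑_{B ∈ P_n} θ^{#B} ∏_{b∈B} Γ(#b) = θ^{↑n}, where P_n is the set of partitions of {1,…,n}, #B is the number of blocks, #b the block size, and θ^{↑n} = θ(θ+1)⋯(θ+n-1). -/

import Mathlib

open scoped Classical

section Aux

variable {α : Type*} [DecidableEq α]

def IsPartitionOf (s : Finset α) (P : Finset (Finset α)) : Prop :=
  (∀ b ∈ P, b.Nonempty) ∧ (∀ b ∈ P, ∀ c ∈ P, b ≠ c → Disjoint b c) ∧
    P.sup id = s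

lemma block_subset {s : Finset α} {P : Finset (Finset α)} (hP : IsPartitionOf s P)
    {b : Finset α} (hb : b ∈ P) : b ⊆ s := by
  have := Finset.le_sup (f := id) hb
  rw [hP.2.2] at this
  exact this

noncomputable def parts (s : Finset α) : Finset (Finset (Finset α)) :=
  (s.powerset.powerset).filter (fun P => IsPartitionOf s P)

lemma mem_parts {s : Finset α} {P : Finset (Finset α)} :
    P ∈ parts s ↔ IsPartitionOf s P := by
  simp only [parts, Finset.mem_filter, Finset.mem_powerset, and_iff_right_iff_imp]
  intro hP
  intro b hb
  rw [Finset.mem_powerset]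
  exact block_subset hP hb

lemma sum_card_blocks {s : Finset α} {P : Finset (Finset α)} (hP : IsPartitionOf s P) :
    ∑ b ∈ P, b.card = s.card := by
  rw [← hP.2.2, Finset.sup_eq_biUnion]
  exact (Finset.card_biUnion (fun b hb c hc h => hP.2.1 b hb c hc h)).symm

lemma empty_not_mem {s : Finset α} {P : Finset (Finset α)} (hP : IsPartitionOf s P) :
    (∅ : Finset α) ∉ P := fun h => by simpa using hP.1 ∅ h

noncomputable def W (θ : ℝ) (P : Finset (Finset α)) : ℝ :=
  θ ^ P.card * ∏ b ∈ P, Real.Gamma (b.card)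

def g (a : α) (P : Finset (Finset α)) (o : Finset α) : Finset (Finset α) :=
  if o = ∅ then insert {a} P else insert (insert a o) (P.erase o)

def blk (a : α) (Q : Finset (Finset α)) : Finset α :=
  Q.sup (fun c => if a ∈ c then c else ∅)

noncomputable def unblk (a : α) (Q : Finset (Finset α)) :
    (_ : Finset (Finset α)) × Finset α :=
  if blk a Q = {a} then ⟨Q.erase {a}, ∅⟩
  else ⟨insert ((blk a Q).erase a) (Q.erase (blk a Q)), (blk a Q).erase a⟩

lemma blk_eq {t : Finset α} {Q : Finset (Finset α)} (hQ : IsPartitionOf t Q)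
    {a : α} {b : Finset α} (hb : b ∈ Q) (hab : a ∈ b) : blk a Q = b := by
  apply le_antisymm
  · apply Finset.sup_le
    intro c hc
    by_cases h : a ∈ c
    · simp only [if_pos h]
      by_contra hcb
      rcases eq_or_ne c b with rfl | hne
      · exact hcb le_rfl
      · exact absurd (hQ.2.1 c hc b hb hne) (by
          rw [Finset.disjoint_left]
          intro hd
          exact hd h hab)
    · simp [if_neg h]
  · have := Finset.le_sup (f := fun c => if a ∈ c then c else ∅) hb
    simpa [blk, if_pos hab] using this

lemma blk_spec {s : Finset α} {Q : Finset (Finset α)} (ha : a ∉ s)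
    (hQ : IsPartitionOf (insert a s) Q) :
    blk a Q ∈ Q ∧ a ∈ blk a Q := by
  have : a ∈ Q.sup id := by rw [hQ.2.2]; exact Finset.mem_insert_self a s
  rw [Finset.mem_sup] at this
  obtain ⟨b, hb, hab⟩ := this
  rw [blk_eq hQ hb hab]
  exact ⟨hb, hab⟩

-- g lands in partitions of insert a s
lemma isPartitionOf_g {a : α} {s : Finset α} (ha : a ∉ s) {P : Finset (Finset α)}
    (hP : IsPartitionOf s P) {o : Finset α} (ho : o ∈ insert (∅ : Finset α) P) :
    IsPartitionOf (insert a s) (g a P o) := by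
  have hsub : ∀ b ∈ P, b ⊆ s := fun b hb => block_subset hP hb
  have hanb : ∀ b ∈ P, a ∉ b := fun b hb h => ha (hsub b hb h)
  rcases Finset.mem_insert.mp ho with rfl | hoP
  · -- new singleton block
    rw [g, if_pos rfl]
    refine ⟨?_, ?_, ?_⟩
    · intro b hb
      rcases Finset.mem_insert.mp hb with rfl | hb
      · exact ⟨a, Finset.mem_singleton_self a⟩
      · exact hP.1 b hb
    · intro b hb c hc hbc
      rcases Finset.mem_insert.mp hb with rfl | hb <;>
        rcases Finset.mem_insert.mp hc with rfl | hc
      · exact absurd rfl hbc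
      · simpa [Finset.disjoint_left] using hanb c hc
      · simpa [Finset.disjoint_right] using hanb b hb
      · exact hP.2.1 b hb c hc hbc
    · rw [Finset.sup_insert, hP.2.2]
      ext x; simp [or_comm]
  · -- insert a into block o
    have honempty : o ≠ ∅ := Finset.nonempty_iff_ne_empty.mp (hP.1 o hoP)
    rw [g, if_neg honempty]
    refine ⟨?_, ?_, ?_⟩
    · intro b hb
      rcases Finset.mem_insert.mp hb with rfl | hb
      · exact ⟨a, Finset.mem_insert_self a o⟩
      · exact hP.1 b (Finset.mem_of_mem_erase hb)
    · intro b hb c hc hbc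
      rcases Finset.mem_insert.mp hb with rfl | hb <;>
        rcases Finset.mem_insert.mp hc with rfl | hc
      · exact absurd rfl hbc
      · rw [Finset.disjoint_insert_left]
        exact ⟨hanb c (Finset.mem_of_mem_erase hc),
          hP.2.1 o hoP c (Finset.mem_of_mem_erase hc)
            (Ne.symm (Finset.ne_of_mem_erase hc))⟩
      · rw [Finset.disjoint_insert_right]
        exact ⟨hanb b (Finset.mem_of_mem_erase hb),
          (hP.2.1 o hoP b (Finset.mem_of_mem_erase hb)
            (Ne.symm (Finset.ne_of_mem_erase hb))).symm⟩
      · exact hP.2.1 b (Finset.mem_of_mem_erase hb) c (Finset.mem_of_mem_erase hc) hbc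
    · have hmem : ∀ x, x ∈ s ↔ ∃ c, c ∈ P ∧ x ∈ c := fun x => by
        rw [← hP.2.2]; simp [Finset.mem_sup]
      apply Finset.ext
      intro x
      simp only [Finset.sup_insert, Finset.sup_eq_union, Finset.mem_union, Finset.mem_insert,
        Finset.mem_sup, Finset.mem_erase, id_eq, hmem]
      constructor
      · rintro ((rfl | hxo) | ⟨c, ⟨hco, hc⟩, hxc⟩)
        · exact Or.inl rfl
        · exact Or.inr ⟨o, hoP, hxo⟩
        · exact Or.inr ⟨c, hc, hxc⟩
      · rintro (rfl | ⟨c, hc, hxc⟩)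
        · exact Or.inl (Or.inl rfl)
        · by_cases hco : c = o
          · subst hco; exact Or.inl (Or.inr hxc)
          · exact Or.inr ⟨c, ⟨hco, hc⟩, hxc⟩

lemma uniq_block {s : Finset α} {a : α} (ha : a ∉ s) {Q : Finset (Finset α)}
    (hQ : IsPartitionOf (insert a s) Q) {c : Finset α} (hc : c ∈ Q) (hac : a ∈ c) :
    c = blk a Q := (blk_eq hQ hc hac).symm

lemma unblk_fst {s : Finset α} {a : α} (ha : a ∉ s) {Q : Finset (Finset α)}
    (hQ : IsPartitionOf (insert a s) Q) : IsPartitionOf s (unblk a Q).1 := by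
  obtain ⟨hbQ, habQ⟩ := blk_spec ha hQ
  have hmem : ∀ x, x ∈ insert a s ↔ ∃ c, c ∈ Q ∧ x ∈ c := fun x => by
    rw [← hQ.2.2]; simp [Finset.mem_sup]
  by_cases h : blk a Q = {a}
  · rw [unblk, if_pos h]
    refine ⟨fun b hb => hQ.1 b (Finset.mem_of_mem_erase hb),
      fun b hb c hc hbc => hQ.2.1 b (Finset.mem_of_mem_erase hb)
        c (Finset.mem_of_mem_erase hc) hbc, ?_⟩
    apply Finset.ext
    intro x
    simp only [Finset.mem_sup, Finset.mem_erase, id_eq]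
    constructor
    · rintro ⟨c, ⟨hca, hc⟩, hxc⟩
      have hx : x ∈ insert a s := (hmem x).mpr ⟨c, hc, hxc⟩
      rcases Finset.mem_insert.mp hx with rfl | hxs
      · exact absurd ((uniq_block ha hQ hc hxc).trans h) hca
      · exact hxs
    · intro hxs
      obtain ⟨c, hc, hxc⟩ := (hmem x).mp (Finset.mem_insert_of_mem hxs)
      refine ⟨c, ⟨?_, hc⟩, hxc⟩
      rintro rfl
      exact ha (by rwa [Finset.mem_singleton.mp hxc] at hxs)
  · rw [unblk, if_neg h]
    set b₀ := blk a Q with hb₀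
    have honempty : (b₀.erase a).Nonempty := by
      rw [Finset.nonempty_iff_ne_empty]
      intro hemp
      rcases (Finset.erase_eq_empty_iff _ _).mp hemp with h1 | h1
      · exact absurd h1 (Finset.nonempty_iff_ne_empty.mp (hQ.1 _ hbQ))
      · exact h h1
    have hnot : b₀.erase a ∉ Q.erase b₀ := by
      intro hmem'
      have hdj := hQ.2.1 _ (Finset.mem_of_mem_erase hmem') _ hbQ (Finset.ne_of_mem_erase hmem')
      obtain ⟨x, hx⟩ := honempty
      exact (Finset.disjoint_left.mp hdj hx) (Finset.mem_of_mem_erase hx)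
    refine ⟨?_, ?_, ?_⟩
    · intro b hb
      rcases Finset.mem_insert.mp hb with rfl | hb
      · exact honempty
      · exact hQ.1 b (Finset.mem_of_mem_erase hb)
    · intro b hb c hc hbc
      rcases Finset.mem_insert.mp hb with rfl | hb <;>
        rcases Finset.mem_insert.mp hc with rfl | hc
      · exact absurd rfl hbc
      · exact Finset.disjoint_of_subset_left (Finset.erase_subset a b₀)
          (hQ.2.1 _ hbQ _ (Finset.mem_of_mem_erase hc) (Ne.symm (Finset.ne_of_mem_erase hc)))
      · exact Finset.disjoint_of_subset_right (Finset.erase_subset a b₀)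
          ((hQ.2.1 _ hbQ _ (Finset.mem_of_mem_erase hb)
            (Ne.symm (Finset.ne_of_mem_erase hb))).symm)
      · exact hQ.2.1 b (Finset.mem_of_mem_erase hb) c (Finset.mem_of_mem_erase hc) hbc
    · apply Finset.ext
      intro x
      simp only [Finset.sup_insert, Finset.sup_eq_union, Finset.mem_union, Finset.mem_erase,
        Finset.mem_sup, id_eq]
      constructor
      · rintro (⟨hxa, hxb⟩ | ⟨c, ⟨hcb, hc⟩, hxc⟩)
        · have hx : x ∈ insert a s := (hmem x).mpr ⟨b₀, hbQ, hxb⟩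
          rcases Finset.mem_insert.mp hx with rfl | hxs
          · exact absurd rfl hxa
          · exact hxs
        · have hx : x ∈ insert a s := (hmem x).mpr ⟨c, hc, hxc⟩
          rcases Finset.mem_insert.mp hx with rfl | hxs
          · exact absurd (uniq_block ha hQ hc hxc) hcb
          · exact hxs
      · intro hxs
        have hxa : x ≠ a := fun hh => ha (hh ▸ hxs)
        obtain ⟨c, hc, hxc⟩ := (hmem x).mp (Finset.mem_insert_of_mem hxs)
        by_cases hcb : c = b₀
        · exact Or.inl ⟨hxa, hcb ▸ hxc⟩
        · exact Or.inr ⟨c, ⟨hcb, hc⟩, hxc⟩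

lemma unblk_snd {s : Finset α} {a : α} (ha : a ∉ s) {Q : Finset (Finset α)}
    (hQ : IsPartitionOf (insert a s) Q) : (unblk a Q).2 ∈ insert (∅ : Finset α) (unblk a Q).1 := by
  by_cases h : blk a Q = {a}
  · rw [unblk, if_pos h]
    exact Finset.mem_insert_self _ _
  · rw [unblk, if_neg h]
    exact Finset.mem_insert_of_mem (Finset.mem_insert_self _ _)

lemma g_unblk {s : Finset α} {a : α} (ha : a ∉ s) {Q : Finset (Finset α)}
    (hQ : IsPartitionOf (insert a s) Q) : g a (unblk a Q).1 (unblk a Q).2 = Q := by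
  obtain ⟨hbQ, habQ⟩ := blk_spec ha hQ
  by_cases h : blk a Q = {a}
  · rw [unblk, if_pos h, g, if_pos rfl]
    rw [← h]
    exact Finset.insert_erase hbQ
  · rw [unblk, if_neg h]
    have honempty : (blk a Q).erase a ≠ ∅ := by
      intro hemp
      rcases (Finset.erase_eq_empty_iff _ _).mp hemp with h1 | h1
      · exact absurd h1 (Finset.nonempty_iff_ne_empty.mp (hQ.1 _ hbQ))
      · exact h h1
    have hnot : (blk a Q).erase a ∉ Q.erase (blk a Q) := by
      intro hmem'
      have hdj := hQ.2.1 _ (Finset.mem_of_mem_erase hmem') _ hbQ (Finset.ne_of_mem_erase hmem')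
      obtain ⟨x, hx⟩ := Finset.nonempty_iff_ne_empty.mpr honempty
      exact (Finset.disjoint_left.mp hdj hx) (Finset.mem_of_mem_erase hx)
    rw [g, if_neg honempty, Finset.insert_erase habQ, Finset.erase_insert hnot,
      Finset.insert_erase hbQ]

lemma unblk_g {s : Finset α} {a : α} (ha : a ∉ s) {P : Finset (Finset α)}
    (hP : IsPartitionOf s P) {o : Finset α} (ho : o ∈ insert (∅ : Finset α) P) :
    unblk a (g a P o) = ⟨P, o⟩ := by
  have hQ := isPartitionOf_g ha hP ho
  rcases Finset.mem_insert.mp ho with rfl | hoP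
  · have hsa : {a} ∉ P := fun hh => ha (block_subset hP hh (Finset.mem_singleton_self a))
    have hg : g a P ∅ = insert {a} P := by rw [g, if_pos rfl]
    have hblk : blk a (g a P ∅) = {a} := by
      rw [hg] at hQ ⊢
      exact blk_eq hQ (Finset.mem_insert_self _ _) (Finset.mem_singleton_self a)
    rw [unblk, if_pos hblk, hg, Finset.erase_insert hsa]
  · have honem : o ≠ ∅ := Finset.nonempty_iff_ne_empty.mp (hP.1 o hoP)
    have hao : a ∉ o := fun hh => ha (block_subset hP hoP hh)
    have hg : g a P o = insert (insert a o) (P.erase o) := by rw [g, if_neg honem]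
    have hblk : blk a (g a P o) = insert a o := by
      rw [hg] at hQ ⊢
      exact blk_eq hQ (Finset.mem_insert_self _ _) (Finset.mem_insert_self a o)
    have hne : insert a o ≠ {a} := by
      intro hh
      obtain ⟨x, hx⟩ := hP.1 o hoP
      have : x ∈ ({a} : Finset α) := hh ▸ Finset.mem_insert_of_mem hx
      exact hao (Finset.mem_singleton.mp this ▸ hx)
    have hnot : insert a o ∉ P.erase o := fun hh =>
      ha (block_subset hP (Finset.mem_of_mem_erase hh) (Finset.mem_insert_self a o))
    rw [unblk, if_neg (hblk ▸ hne), hblk, Finset.erase_insert hao, hg,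
      Finset.erase_insert hnot, Finset.insert_erase hoP]

lemma W_g_empty (θ : ℝ) {s : Finset α} {a : α} (ha : a ∉ s) {P : Finset (Finset α)}
    (hP : IsPartitionOf s P) : W θ (g a P ∅) = θ * W θ P := by
  have hsa : {a} ∉ P := fun hh => ha (block_subset hP hh (Finset.mem_singleton_self a))
  rw [g, if_pos rfl]; unfold W; rw [Finset.card_insert_of_notMem hsa, Finset.prod_insert hsa]
  simp only [Finset.card_singleton, Nat.cast_one, Real.Gamma_one]
  ring

lemma W_g_block (θ : ℝ) {s : Finset α} {a : α} (ha : a ∉ s) {P : Finset (Finset α)}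
    (hP : IsPartitionOf s P) {b : Finset α} (hb : b ∈ P) :
    W θ (g a P b) = (b.card : ℝ) * W θ P := by
  have honem : b ≠ ∅ := Finset.nonempty_iff_ne_empty.mp (hP.1 b hb)
  have hab : a ∉ b := fun hh => ha (block_subset hP hb hh)
  have hnot : insert a b ∉ P.erase b := fun hh =>
    ha (block_subset hP (Finset.mem_of_mem_erase hh) (Finset.mem_insert_self a b))
  have hcard : (insert (insert a b) (P.erase b)).card = P.card := by
    rw [Finset.card_insert_of_notMem hnot, Finset.card_erase_of_mem hb]
    exact Nat.succ_pred_eq_of_pos (Finset.card_pos.mpr ⟨b, hb⟩)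
  rw [g, if_neg honem]; unfold W; rw [hcard, Finset.prod_insert hnot,
    Finset.card_insert_of_notMem hab]
  have hG : Real.Gamma ((b.card + 1 : ℕ) : ℝ) = (b.card : ℝ) * Real.Gamma (b.card) := by
    push_cast
    exact Real.Gamma_add_one (Nat.cast_ne_zero.mpr
      (Finset.card_ne_zero_of_mem (hP.1 b hb).choose_spec))
  rw [hG, ← Finset.mul_prod_erase P _ hb]
  ring

lemma ewens_sum (θ : ℝ) (s : Finset α) :
    ∑ P ∈ parts s, W θ P = ∏ j ∈ Finset.range s.card, (θ + j) := by
  induction s using Finset.induction_on with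
  | empty =>
    have hparts : parts (∅ : Finset α) = {∅} := by
      ext P
      rw [mem_parts, Finset.mem_singleton]
      constructor
      · intro hP
        rw [Finset.eq_empty_iff_forall_notMem]
        intro b hb
        obtain ⟨x, hx⟩ := hP.1 b hb
        exact absurd (block_subset hP hb hx) (Finset.notMem_empty x)
      · rintro rfl
        exact ⟨fun b hb => absurd hb (Finset.notMem_empty b),
          fun b hb => absurd hb (Finset.notMem_empty b), rfl⟩
    rw [hparts, Finset.sum_singleton]
    simp [W]
  | @insert a s ha ih =>
    have key : ∑ x ∈ (parts s).sigma (fun P => insert ∅ P), W θ (g a x.1 x.2)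
        = ∑ Q ∈ parts (insert a s), W θ Q := by
      refine Finset.sum_bij' (fun x _ => g a x.1 x.2) (fun Q _ => unblk a Q) ?_ ?_ ?_ ?_ ?_
      · rintro ⟨P, o⟩ hx
        rw [Finset.mem_sigma] at hx
        exact mem_parts.mpr (isPartitionOf_g ha (mem_parts.mp hx.1) hx.2)
      · intro Q hQ
        rw [mem_parts] at hQ
        rw [Finset.mem_sigma, mem_parts]
        exact ⟨unblk_fst ha hQ, unblk_snd ha hQ⟩
      · rintro ⟨P, o⟩ hx
        rw [Finset.mem_sigma, mem_parts] at hx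
        exact unblk_g ha hx.1 hx.2
      · intro Q hQ
        exact g_unblk ha (mem_parts.mp hQ)
      · intros; rfl
    rw [← key, Finset.sum_sigma]
    have hinner : ∀ P ∈ parts s, ∑ o ∈ insert ∅ P, W θ (g a P o)
        = (θ + s.card) * W θ P := by
      intro P hPm
      have hP := mem_parts.mp hPm
      rw [Finset.sum_insert (empty_not_mem hP), W_g_empty θ ha hP,
        Finset.sum_congr rfl (fun b hb => W_g_block θ ha hP hb), ← Finset.sum_mul]
      have hsum : ∑ b ∈ P, (b.card : ℝ) = (s.card : ℝ) := by
        exact_mod_cast congrArg (Nat.cast (R := ℝ)) (sum_card_blocks hP)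
      rw [hsum]
      ring
    rw [Finset.sum_congr rfl hinner, ← Finset.mul_sum, ih,
      Finset.card_insert_of_notMem ha, Finset.prod_range_succ]
    ring

end Aux

/-- `P` is a partition of `{1,…,n}` (modelled as `Fin n`): its blocks are nonempty,
pairwise disjoint, and cover everything. -/
def IsPartitionOfUniv {n : ℕ} (P : Finset (Finset (Fin n))) : Prop :=
  (∀ b ∈ P, b.Nonempty) ∧ (∀ b ∈ P, ∀ c ∈ P, b ≠ c → Disjoint b c) ∧
    P.sup id = Finset.univ

theorem stmt_16 (θ : ℝ) (hθ : 0 < θ) (n : ℕ) (hn : 1 ≤ n) :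
    ∑ P ∈ Finset.univ.filter (fun P : Finset (Finset (Fin n)) => IsPartitionOfUniv P),
        θ ^ P.card * ∏ b ∈ P, Real.Gamma (b.card) =
      ∏ j ∈ Finset.range n, (θ + j) := by
  have h := ewens_sum θ (Finset.univ : Finset (Fin n))
  rw [Finset.card_univ, Fintype.card_fin] at h
  rw [← h]
  have hset : Finset.univ.filter (fun P : Finset (Finset (Fin n)) => IsPartitionOfUniv P)
      = parts (Finset.univ : Finset (Fin n)) := by
    ext P
    rw [mem_parts, Finset.mem_filter]
    exact ⟨fun hh => hh.2, fun hh => ⟨Finset.mem_univ _, hh⟩⟩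
  rw [hset]
  exact Finset.sum_congr rfl (fun P _ => by rw [W])
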